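/- Let f, g : ℝ → [0, ∞) be integrable log-concave functions. Then their convolution h(x) = ∫_ℝ f(x − y) g(y) dy is log-concave on ℝ: for all x₁, x₂ ∈ ℝ and all t ∈ [0, 1], h(t x₁ + (1 − t) x₂) ≥ h(x₁)^t · h(x₂)^{1−t}. -/

import Mathlib

open MeasureTheory
open scoped ENNReal Pointwise

namespace ConvLC

/-- 1D Brunn–Minkowski for nonempty compact sets, via the sup/inf translate trick. -/
lemma compact_bm {K L C : Set ℝ} (hK : IsCompact K) (hL : IsCompact L)
    (hKne : K.Nonempty) (hLne : L.Nonempty)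
    (hC : ∀ u ∈ K, ∀ v ∈ L, u + v ∈ C) :
    volume K + volume L ≤ volume C := by
  set a := sSup K with ha
  set b := sInf L with hb
  have haK : a ∈ K := hK.sSup_mem hKne
  have hbL : b ∈ L := hL.sInf_mem hLne
  set S := (fun x => x + b) '' K with hS
  set T := (fun x => x + a) '' L with hT
  have hSvol : volume S = volume K := by
    rw [hS, Set.image_add_right, measure_preimage_add_right]
  have hTvol : volume T = volume L := by
    rw [hT, Set.image_add_right, measure_preimage_add_right]
  have hTmeas : MeasurableSet T :=
    ((hL.image (continuous_id.add continuous_const)).isClosed).measurableSet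
  have hST : S ∪ T ⊆ C := by
    rintro x (⟨u, hu, rfl⟩ | ⟨v, hv, rfl⟩)
    · exact hC u hu b hbL
    · simpa [add_comm] using hC a haK v hv
  have hint : volume (S ∩ T) = 0 := by
    refine measure_mono_null ?_ (measure_singleton (a + b))
    rintro x ⟨⟨u, hu, rfl⟩, ⟨v, hv, hvx⟩⟩
    have h1 : u ≤ a := le_csSup hK.bddAbove hu
    have h2 : b ≤ v := csInf_le hL.bddBelow hv
    simp only at hvx
    have : u + b = a + b := by linarith
    simpa [Set.mem_singleton_iff] using this
  calc volume K + volume L = volume S + volume T := by rw [hSvol, hTvol]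
    _ = volume (S ∪ T) + volume (S ∩ T) := (measure_union_add_inter S hTmeas).symm
    _ = volume (S ∪ T) := by rw [hint, add_zero]
    _ ≤ volume C := measure_mono hST


lemma vol_mul_image (r : ℝ) (hr : 0 ≤ r) (K : Set ℝ) :
    volume ((fun x => r * x) '' K) = ENNReal.ofReal r * volume K := by
  have h1 : (fun x : ℝ => r * x) = (fun x : ℝ => r • x) := by
    funext x; rw [smul_eq_mul]
  rw [h1, Set.image_smul, Measure.addHaar_smul_of_nonneg volume hr K]
  simp

/-- 1D Brunn–Minkowski with weights, for nonempty convex sets of finite measure. -/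
lemma convex_bm {t : ℝ} (ht0 : 0 < t) (ht1 : t < 1) {A B C : Set ℝ}
    (hA : Convex ℝ A) (hB : Convex ℝ B)
    (hAf : volume A ≠ ⊤) (hBf : volume B ≠ ⊤)
    (hAne : A.Nonempty) (hBne : B.Nonempty)
    (hC : ∀ u ∈ A, ∀ v ∈ B, t * u + (1 - t) * v ∈ C) :
    ENNReal.ofReal t * volume A + ENNReal.ofReal (1 - t) * volume B ≤ volume C := by
  obtain ⟨a₀, ha₀⟩ := hAne
  obtain ⟨b₀, hb₀⟩ := hBne
  have hAmeas : MeasurableSet A := hA.ordConnected.measurableSet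
  have hBmeas : MeasurableSet B := hB.ordConnected.measurableSet
  refine ENNReal.le_of_forall_pos_le_add fun ε hε hCfin => ?_
  have hε2 : ((ε : ℝ≥0∞) / 2) ≠ 0 := by
    simp [ENNReal.div_eq_top, hε.ne']
  obtain ⟨K, hKA, hKc, hKlt⟩ := hAmeas.exists_isCompact_lt_add hAf hε2
  obtain ⟨L, hLB, hLc, hLlt⟩ := hBmeas.exists_isCompact_lt_add hBf hε2
  set K' : Set ℝ := insert a₀ K with hK'
  set L' : Set ℝ := insert b₀ L with hL'
  have hK'A : K' ⊆ A := Set.insert_subset ha₀ hKA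
  have hL'B : L' ⊆ B := Set.insert_subset hb₀ hLB
  have hK'lt : volume A < volume K' + ε / 2 :=
    hKlt.trans_le (add_le_add_left (measure_mono (Set.subset_insert _ _)) _)
  have hL'lt : volume B < volume L' + ε / 2 :=
    hLlt.trans_le (add_le_add_left (measure_mono (Set.subset_insert _ _)) _)
  have hbm : volume ((fun x => t * x) '' K') + volume ((fun x => (1 - t) * x) '' L')
      ≤ volume C := by
    refine compact_bm ((hKc.insert a₀).image (continuous_const.mul continuous_id))
      ((hLc.insert b₀).image (continuous_const.mul continuous_id))
      ((Set.insert_nonempty _ _).image _) ((Set.insert_nonempty _ _).image _) ?_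
    rintro _ ⟨u, hu, rfl⟩ _ ⟨v, hv, rfl⟩
    exact hC u (hK'A hu) v (hL'B hv)
  rw [vol_mul_image t ht0.le, vol_mul_image (1 - t) (by linarith)] at hbm
  have h1 : ENNReal.ofReal t ≤ 1 := ENNReal.ofReal_le_one.2 ht1.le
  have h2 : ENNReal.ofReal (1 - t) ≤ 1 := ENNReal.ofReal_le_one.2 (by linarith)
  calc ENNReal.ofReal t * volume A + ENNReal.ofReal (1 - t) * volume B
      ≤ ENNReal.ofReal t * (volume K' + ε / 2) + ENNReal.ofReal (1 - t) * (volume L' + ε / 2) :=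
        add_le_add (mul_le_mul_right hK'lt.le _) (mul_le_mul_right hL'lt.le _)
    _ = (ENNReal.ofReal t * volume K' + ENNReal.ofReal (1 - t) * volume L')
        + (ENNReal.ofReal t * (ε / 2) + ENNReal.ofReal (1 - t) * (ε / 2)) := by ring
    _ ≤ volume C + (1 * (ε / 2) + 1 * (ε / 2)) :=
        add_le_add hbm (add_le_add (mul_le_mul_left h1 _) (mul_le_mul_left h2 _))
    _ = volume C + ε := by rw [one_mul, ENNReal.add_halves]

lemma superlevel_convex {F : ℝ → ℝ}
    (hFlc : ∀ y z s : ℝ, 0 ≤ s → s ≤ 1 → F y ^ s * F z ^ (1 - s) ≤ F (s * y + (1 - s) * z))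
    {c : ℝ} (hc : 0 < c) : Convex ℝ {y | c < F y} := by
  intro y hy z hz p q hp hq hpq
  simp only [Set.mem_setOf_eq] at hy hz ⊢
  have hq' : q = 1 - p := by linarith
  subst hq'
  simp only [smul_eq_mul]
  rcases eq_or_lt_of_le hp with hp0 | hp0
  · rw [← hp0]; norm_num; exact hz
  rcases eq_or_lt_of_le (show p ≤ 1 by linarith) with hp1 | hp1
  · rw [hp1]; norm_num; exact hy
  calc c = c ^ p * c ^ (1 - p) := by
        rw [← Real.rpow_add hc, show p + (1 - p) = 1 by ring, Real.rpow_one]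
    _ < F y ^ p * F z ^ (1 - p) :=
        mul_lt_mul'' (Real.rpow_lt_rpow hc.le hy hp0)
          (Real.rpow_lt_rpow hc.le hz (by linarith))
          (Real.rpow_nonneg hc.le _) (Real.rpow_nonneg hc.le _)
    _ ≤ F (p * y + (1 - p) * z) := hFlc y z p hp (by linarith)

/-- An integrable nonnegative log-concave function that is positive at two distinct points
is (globally) bounded. -/
lemma logConcave_bounded {f : ℝ → ℝ} (hf0 : ∀ x, 0 ≤ f x) (hfi : Integrable f)
    (hflc : ∀ x y t : ℝ, 0 ≤ t → t ≤ 1 → f x ^ t * f y ^ (1 - t) ≤ f (t * x + (1 - t) * y))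
    {a b : ℝ} (hab : a < b) (ha : 0 < f a) (hb : 0 < f b) :
    ∃ M : ℝ, ∀ x, f x ≤ M := by
  set m := min (f a) (f b) with hm
  have hm0 : 0 < m := lt_min ha hb
  set I := ∫ x, f x with hI
  set K := 4 * I / ((b - a) * m ^ (2⁻¹ : ℝ)) with hKdef
  refine ⟨max m (K ^ 2), fun w => ?_⟩
  rcases le_or_gt (f w) m with hcase | hcase
  · exact hcase.trans (le_max_left _ _)
  refine le_trans ?_ (le_max_right _ _)
  obtain ⟨p, hpf, hwp⟩ : ∃ p, m ≤ f p ∧ (b - a) / 2 ≤ |w - p| := by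
    rcases le_or_gt w ((a + b) / 2) with hw | hw
    · exact ⟨b, min_le_right _ _, by rw [abs_sub_comm, abs_of_nonneg (by linarith)]; linarith⟩
    · exact ⟨a, min_le_left _ _, by rw [abs_of_nonneg (by linarith)]; linarith⟩
  have hd : w - p ≠ 0 := by
    intro h0; rw [h0, abs_zero] at hwp; linarith
  have hfw : 0 < f w := lt_trans hm0 hcase
  set c : ℝ := m ^ (2⁻¹ : ℝ) * f w ^ (2⁻¹ : ℝ) with hcdef
  have hc0 : 0 < c := mul_pos (Real.rpow_pos_of_pos hm0 _) (Real.rpow_pos_of_pos hfw _)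
  set J := Set.Icc (min w ((w + p) / 2)) (max w ((w + p) / 2)) with hJ
  have hJvol : (volume J).toReal = |w - p| / 2 := by
    rw [hJ, Real.volume_Icc, ENNReal.toReal_ofReal (by
      rcases le_total w ((w + p) / 2) with h | h
      · rw [min_eq_left h, max_eq_right h]; linarith
      · rw [min_eq_right h, max_eq_left h]; linarith)]
    rw [max_sub_min_eq_abs, abs_sub_comm ((w + p) / 2) w,
      show w - (w + p) / 2 = (w - p) / 2 by ring, abs_div, abs_two]
  have hpt : ∀ z ∈ J, c ≤ f z := by
    intro z hz
    obtain ⟨hz1, hz2⟩ := hz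
    set s := (z - p) / (w - p) with hs
    have hsw : s * (w - p) = z - p := div_mul_cancel₀ _ hd
    have hsb : 2⁻¹ ≤ s ∧ s ≤ 1 := by
      rcases lt_or_gt_of_ne (fun h : w = p => hd (by rw [h, sub_self])) with hlt | hgt
      · -- w < p : min = w, max = (w+p)/2
        rw [min_eq_left (by linarith)] at hz1
        rw [max_eq_right (by linarith)] at hz2
        constructor
        · by_contra hcon
          push_neg at hcon
          have := mul_lt_mul_of_neg_right hcon (show w - p < 0 by linarith)
          rw [hsw] at this
          linarith
        · by_contra hcon
          push_neg at hcon
          have := mul_lt_mul_of_neg_right hcon (show w - p < 0 by linarith)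
          rw [hsw] at this
          linarith
      · -- p < w : min = (w+p)/2, max = w
        rw [min_eq_right (by linarith)] at hz1
        rw [max_eq_left (by linarith)] at hz2
        constructor
        · by_contra hcon
          push_neg at hcon
          have := mul_lt_mul_of_pos_right hcon (show 0 < w - p by linarith)
          rw [hsw] at this
          linarith
        · by_contra hcon
          push_neg at hcon
          have := mul_lt_mul_of_pos_right hcon (show 0 < w - p by linarith)
          rw [hsw] at this
          linarith
    obtain ⟨hs1, hs2⟩ := hsb
    have key : f w ^ s * m ^ (1 - s) ≤ f z := by
      have h1 := hflc w p s (by linarith) hs2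
      rw [show s * w + (1 - s) * p = z by linear_combination hsw] at h1
      refine le_trans (mul_le_mul_of_nonneg_left ?_ (Real.rpow_nonneg (hf0 w) s)) h1
      exact Real.rpow_le_rpow hm0.le hpf (by linarith)
    refine le_trans ?_ key
    have h2 : (1 : ℝ) ≤ f w ^ (s - 2⁻¹) * m ^ (2⁻¹ - s) := by
      have hmm : m ^ (s - 2⁻¹) * m ^ (2⁻¹ - s) = 1 := by
        rw [← Real.rpow_add hm0, show s - 2⁻¹ + (2⁻¹ - s) = 0 by ring, Real.rpow_zero]
      calc (1 : ℝ) = m ^ (s - 2⁻¹) * m ^ (2⁻¹ - s) := hmm.symm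
        _ ≤ f w ^ (s - 2⁻¹) * m ^ (2⁻¹ - s) :=
            mul_le_mul_of_nonneg_right
              (Real.rpow_le_rpow hm0.le hcase.le (by linarith)) (Real.rpow_nonneg hm0.le _)
    calc c = c * 1 := (mul_one c).symm
      _ ≤ c * (f w ^ (s - 2⁻¹) * m ^ (2⁻¹ - s)) := mul_le_mul_of_nonneg_left h2 hc0.le
      _ = (f w ^ (2⁻¹ : ℝ) * f w ^ (s - 2⁻¹)) * (m ^ (2⁻¹ : ℝ) * m ^ (2⁻¹ - s)) := by
          rw [hcdef]; ring
      _ = f w ^ (2⁻¹ + (s - 2⁻¹)) * m ^ (2⁻¹ + (2⁻¹ - s)) := by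
          rw [Real.rpow_add hfw, Real.rpow_add hm0]
      _ = f w ^ s * m ^ (1 - s) := by
          rw [show (2⁻¹ : ℝ) + (s - 2⁻¹) = s by ring, show (2⁻¹ : ℝ) + (2⁻¹ - s) = 1 - s by ring]
  have hint : c * ((b - a) / 4) ≤ I := by
    have hJfin : volume J < ⊤ := by rw [hJ, Real.volume_Icc]; exact ENNReal.ofReal_lt_top
    have h1 : ∫ _ in J, c ≤ ∫ z in J, f z := by
      refine setIntegral_mono_on ?_ hfi.integrableOn measurableSet_Icc hpt
      exact integrableOn_const hJfin.ne
    have h2 : ∫ _ in J, c = (volume J).toReal * c := by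
      rw [setIntegral_const, smul_eq_mul]; rfl
    have h3 : ∫ z in J, f z ≤ I := setIntegral_le_integral hfi (Filter.Eventually.of_forall hf0)
    calc c * ((b - a) / 4) ≤ c * (|w - p| / 2) := by
          apply mul_le_mul_of_nonneg_left _ hc0.le
          linarith
      _ = (volume J).toReal * c := by rw [hJvol]; ring
      _ ≤ I := by rw [← h2]; exact h1.trans h3
  have hKc : f w ^ (2⁻¹ : ℝ) ≤ K := by
    rw [hKdef, le_div_iff₀ (mul_pos (by linarith : (0:ℝ) < b - a) (Real.rpow_pos_of_pos hm0 (2⁻¹ : ℝ)))]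
    nlinarith [hint, Real.rpow_pos_of_pos hm0 (2⁻¹ : ℝ), Real.rpow_pos_of_pos hfw (2⁻¹ : ℝ)]
  calc f w = (f w ^ (2⁻¹ : ℝ)) ^ (2 : ℕ) := by
        rw [← Real.rpow_natCast (f w ^ (2⁻¹ : ℝ)) 2, ← Real.rpow_mul (hf0 w)]
        norm_num
    _ ≤ K ^ (2 : ℕ) := pow_le_pow_left₀ (Real.rpow_nonneg (hf0 w) _) hKc 2
    _ = K ^ 2 := by norm_num

/-- If a nonnegative function is positive at no two distinct points, it vanishes off a point. -/
lemma support_subsingleton {f : ℝ → ℝ} (hf0 : ∀ x, 0 ≤ f x)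
    (hdeg : ¬ ∃ a b, a < b ∧ 0 < f a ∧ 0 < f b) :
    ∃ c, ∀ x, x ≠ c → f x = 0 := by
  push_neg at hdeg
  by_cases hex : ∃ c, 0 < f c
  · obtain ⟨c, hc⟩ := hex
    refine ⟨c, fun x hx => ?_⟩
    by_contra hfx
    have hfx' : 0 < f x := (hf0 x).lt_of_ne (Ne.symm hfx)
    rcases hx.lt_or_gt with h1 | h1
    · exact absurd hc (not_lt.2 (hdeg x c h1 hfx'))
    · exact absurd hfx' (not_lt.2 (hdeg c x h1 hc))
  · push_neg at hex
    exact ⟨0, fun x _ => le_antisymm (hex x) (hf0 x)⟩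

lemma conv_zero_left {f g h : ℝ → ℝ} (hf0 : ∀ x, 0 ≤ f x)
    (hdeg : ¬ ∃ a b, a < b ∧ 0 < f a ∧ 0 < f b)
    (hh : ∀ x, h x = ∫ y, f (x - y) * g y) : ∀ x, h x = 0 := by
  obtain ⟨c, hc⟩ := support_subsingleton hf0 hdeg
  intro x
  rw [hh x]
  have h0 : (fun y => f (x - y) * g y) =ᵐ[volume] (fun _ => (0 : ℝ)) := by
    rw [Filter.EventuallyEq, ae_iff]
    refine measure_mono_null (fun y hy => ?_) (measure_singleton (x - c))
    simp only [Set.mem_setOf_eq] at hy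
    simp only [Set.mem_singleton_iff]
    by_contra hyne
    exact hy (by rw [hc (x - y) (fun hE => hyne (by linarith)), zero_mul])
  rw [integral_congr_ae h0, integral_zero]

lemma conv_zero_right {f g h : ℝ → ℝ} (hg0 : ∀ x, 0 ≤ g x)
    (hdeg : ¬ ∃ a b, a < b ∧ 0 < g a ∧ 0 < g b)
    (hh : ∀ x, h x = ∫ y, f (x - y) * g y) : ∀ x, h x = 0 := by
  obtain ⟨c, hc⟩ := support_subsingleton hg0 hdeg
  intro x
  rw [hh x]
  have h0 : (fun y => f (x - y) * g y) =ᵐ[volume] (fun _ => (0 : ℝ)) := by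
    rw [Filter.EventuallyEq, ae_iff]
    refine measure_mono_null (fun y hy => ?_) (measure_singleton c)
    simp only [Set.mem_setOf_eq] at hy
    simp only [Set.mem_singleton_iff]
    by_contra hyne
    exact hy (by rw [hc y hyne, mul_zero])
  rw [integral_congr_ae h0, integral_zero]

lemma conv_aesm {f g : ℝ → ℝ} (hfm : AEStronglyMeasurable f volume)
    (hgm : AEStronglyMeasurable g volume) (x : ℝ) :
    AEStronglyMeasurable (fun y => f (x - y) * g y) volume := by
  have h1 : MeasurePreserving (fun y : ℝ => x - y) volume volume :=
    Measure.measurePreserving_sub_left volume x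
  exact (hfm.comp_quasiMeasurePreserving h1.quasiMeasurePreserving).mul hgm

lemma conv_integrable {f g : ℝ → ℝ} (hf0 : ∀ x, 0 ≤ f x) (hg0 : ∀ x, 0 ≤ g x)
    (hfm : AEStronglyMeasurable f volume) (hgi : Integrable g)
    {Mf : ℝ} (hMf : ∀ x, f x ≤ Mf) (x : ℝ) :
    Integrable (fun y => f (x - y) * g y) := by
  refine (hgi.const_mul Mf).mono (conv_aesm hfm hgi.1 x)
    (Filter.Eventually.of_forall fun y => ?_)
  rw [Real.norm_eq_abs, abs_of_nonneg (mul_nonneg (hf0 _) (hg0 _))]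
  exact (mul_le_mul_of_nonneg_right (hMf _) (hg0 y)).trans (le_abs_self _)

/-- Log-concavity inequality of the convolution integrand (two centers). -/
lemma lc_mul_bound {f g : ℝ → ℝ} (hf0 : ∀ x, 0 ≤ f x) (hg0 : ∀ x, 0 ≤ g x)
    (hflc : ∀ x y t : ℝ, 0 ≤ t → t ≤ 1 → f x ^ t * f y ^ (1 - t) ≤ f (t * x + (1 - t) * y))
    (hglc : ∀ x y t : ℝ, 0 ≤ t → t ≤ 1 → g x ^ t * g y ^ (1 - t) ≤ g (t * x + (1 - t) * y))
    (u v s : ℝ) (hs0 : 0 ≤ s) (hs1 : s ≤ 1) (y z : ℝ) :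
    (f (u - y) * g y) ^ s * (f (v - z) * g z) ^ (1 - s)
      ≤ f ((s * u + (1 - s) * v) - (s * y + (1 - s) * z)) * g (s * y + (1 - s) * z) := by
  have e1 : (f (u - y) * g y) ^ s * (f (v - z) * g z) ^ (1 - s)
      = (f (u - y) ^ s * f (v - z) ^ (1 - s)) * (g y ^ s * g z ^ (1 - s)) := by
    rw [Real.mul_rpow (hf0 _) (hg0 _), Real.mul_rpow (hf0 _) (hg0 _)]; ring
  rw [e1]
  have h1 : f (u - y) ^ s * f (v - z) ^ (1 - s) ≤ f (s * (u - y) + (1 - s) * (v - z)) :=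
    hflc _ _ s hs0 hs1
  have h2 : g y ^ s * g z ^ (1 - s) ≤ g (s * y + (1 - s) * z) := hglc _ _ s hs0 hs1
  have e2 : s * (u - y) + (1 - s) * (v - z) = (s * u + (1 - s) * v) - (s * y + (1 - s) * z) := by
    ring
  rw [e2] at h1
  exact mul_le_mul h1 h2
    (mul_nonneg (Real.rpow_nonneg (hg0 _) _) (Real.rpow_nonneg (hg0 _) _))
    ((mul_nonneg (Real.rpow_nonneg (hf0 _) _) (Real.rpow_nonneg (hf0 _) _)).trans h1)



/-- One-dimensional Prékopa–Leindler inequality (for bounded functions with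
convex superlevel sets). -/
lemma prekopa_leindler_dim1 {t : ℝ} (ht0 : 0 < t) (ht1 : t < 1)
    (F G H : ℝ → ℝ)
    (hF0 : ∀ y, 0 ≤ F y) (hG0 : ∀ y, 0 ≤ G y) (hH0 : ∀ y, 0 ≤ H y)
    (hFi : Integrable F) (hGi : Integrable G) (hHi : Integrable H)
    (hFlc : ∀ y z s : ℝ, 0 ≤ s → s ≤ 1 → F y ^ s * F z ^ (1 - s) ≤ F (s * y + (1 - s) * z))
    (hGlc : ∀ y z s : ℝ, 0 ≤ s → s ≤ 1 → G y ^ s * G z ^ (1 - s) ≤ G (s * y + (1 - s) * z))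
    (hyp : ∀ y z : ℝ, F y ^ t * G z ^ (1 - t) ≤ H (t * y + (1 - t) * z))
    {MF MG : ℝ} (hMF : 0 < MF) (hMG : 0 < MG)
    (hFle : ∀ y, F y ≤ MF) (hGle : ∀ y, G y ≤ MG)
    (hFsup : ∀ s, s < MF → ∃ y, s < F y) (hGsup : ∀ s, s < MG → ∃ y, s < G y) :
    (∫ y, F y) ^ t * (∫ y, G y) ^ (1 - t) ≤ ∫ y, H y := by
  have ht1' : 0 < 1 - t := by linarith
  set MH : ℝ := MF ^ t * MG ^ (1 - t) with hMHdef
  have hMH : 0 < MH :=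
    mul_pos (Real.rpow_pos_of_pos hMF t) (Real.rpow_pos_of_pos hMG _)
  set F₁ : ℝ → ℝ := fun y => F y / MF with hF₁
  set G₁ : ℝ → ℝ := fun y => G y / MG with hG₁
  set H₁ : ℝ → ℝ := fun y => H y / MH with hH₁
  have hF₁0 : ∀ y, 0 ≤ F₁ y := fun y => div_nonneg (hF0 y) hMF.le
  have hG₁0 : ∀ y, 0 ≤ G₁ y := fun y => div_nonneg (hG0 y) hMG.le
  have hH₁0 : ∀ y, 0 ≤ H₁ y := fun y => div_nonneg (hH0 y) hMH.le
  have hF₁i : Integrable F₁ := hFi.div_const MF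
  have hG₁i : Integrable G₁ := hGi.div_const MG
  have hH₁i : Integrable H₁ := hHi.div_const MH
  have hF₁le : ∀ y, F₁ y ≤ 1 := fun y => (div_le_one hMF).2 (hFle y)
  have hG₁le : ∀ y, G₁ y ≤ 1 := fun y => (div_le_one hMG).2 (hGle y)
  have hyp₁ : ∀ y z, F₁ y ^ t * G₁ z ^ (1 - t) ≤ H₁ (t * y + (1 - t) * z) := by
    intro y z
    show (F y / MF) ^ t * (G z / MG) ^ (1 - t) ≤ H (t * y + (1 - t) * z) / MH
    rw [Real.div_rpow (hF0 y) hMF.le, Real.div_rpow (hG0 z) hMG.le, div_mul_div_comm,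
      ← hMHdef]
    exact div_le_div_of_nonneg_right (hyp y z) hMH.le
  -- level set measures
  set mF : ℝ → ℝ≥0∞ := fun s => volume {y | s < F₁ y} with hmF
  set mG : ℝ → ℝ≥0∞ := fun s => volume {y | s < G₁ y} with hmG
  set mH : ℝ → ℝ≥0∞ := fun s => volume {y | s < H₁ y} with hmH
  have hmFanti : Antitone mF :=
    fun s s' hss' => measure_mono (fun y hy => lt_of_le_of_lt hss' hy)
  have hmGanti : Antitone mG :=
    fun s s' hss' => measure_mono (fun y hy => lt_of_le_of_lt hss' hy)
  have hmHanti : Antitone mH :=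
    fun s s' hss' => measure_mono (fun y hy => lt_of_le_of_lt hss' hy)
  have hmFmeas : Measurable mF := hmFanti.measurable
  have hmGmeas : Measurable mG := hmGanti.measurable
  have hmHmeas : Measurable mH := hmHanti.measurable
  -- finiteness of lintegrals
  have hFlt : ∫⁻ y, ENNReal.ofReal (F₁ y) < ⊤ := by
    calc ∫⁻ y, ENNReal.ofReal (F₁ y) ≤ ∫⁻ y, (‖F₁ y‖₊ : ℝ≥0∞) :=
          lintegral_mono fun y => Real.ofReal_le_enorm _
      _ < ⊤ := hF₁i.2
  have hGlt : ∫⁻ y, ENNReal.ofReal (G₁ y) < ⊤ := by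
    calc ∫⁻ y, ENNReal.ofReal (G₁ y) ≤ ∫⁻ y, (‖G₁ y‖₊ : ℝ≥0∞) :=
          lintegral_mono fun y => Real.ofReal_le_enorm _
      _ < ⊤ := hG₁i.2
  have hHlt : ∫⁻ y, ENNReal.ofReal (H₁ y) < ⊤ := by
    calc ∫⁻ y, ENNReal.ofReal (H₁ y) ≤ ∫⁻ y, (‖H₁ y‖₊ : ℝ≥0∞) :=
          lintegral_mono fun y => Real.ofReal_le_enorm _
      _ < ⊤ := hH₁i.2
  -- superlevel measure finiteness
  have hfin : ∀ (X : ℝ → ℝ), (∀ y, 0 ≤ X y) → Integrable X →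
      (∫⁻ y, ENNReal.ofReal (X y)) < ⊤ → ∀ s : ℝ, 0 < s →
      volume {y | s < X y} ≠ ⊤ := by
    intro X hX0 hXi hXlt s hs
    have hsub : {y | s < X y} ⊆ {y | ENNReal.ofReal s ≤ ENNReal.ofReal (X y)} :=
      fun y hy => ENNReal.ofReal_le_ofReal (le_of_lt hy)
    have hmark := meas_ge_le_lintegral_div (hXi.aemeasurable.ennreal_ofReal)
      (ε := ENNReal.ofReal s) (ENNReal.ofReal_pos.2 hs).ne' ENNReal.ofReal_ne_top
    exact ((measure_mono hsub).trans hmark).trans_lt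
      (ENNReal.div_lt_top hXlt.ne (ENNReal.ofReal_pos.2 hs).ne') |>.ne
  -- key superlevel inequality
  have key : ∀ s ∈ Set.Ioo (0:ℝ) 1,
      ENNReal.ofReal t * mF s + ENNReal.ofReal (1 - t) * mG s ≤ mH s := by
    rintro s ⟨hs0, hs1⟩
    have hAset : {y | s < F₁ y} = {y | s * MF < F y} := by
      ext y; simp only [Set.mem_setOf_eq, hF₁, lt_div_iff₀ hMF]
    have hBset : {y | s < G₁ y} = {y | s * MG < G y} := by
      ext y; simp only [Set.mem_setOf_eq, hG₁, lt_div_iff₀ hMG]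
    have hAconv : Convex ℝ {y | s < F₁ y} := by
      rw [hAset]; exact superlevel_convex hFlc (by positivity)
    have hBconv : Convex ℝ {y | s < G₁ y} := by
      rw [hBset]; exact superlevel_convex hGlc (by positivity)
    have hAne : Set.Nonempty {y | s < F₁ y} := by
      obtain ⟨y, hy⟩ := hFsup (s * MF) (by nlinarith)
      exact ⟨y, by rw [hAset]; exact hy⟩
    have hBne : Set.Nonempty {y | s < G₁ y} := by
      obtain ⟨y, hy⟩ := hGsup (s * MG) (by nlinarith)
      exact ⟨y, by rw [hBset]; exact hy⟩
    refine convex_bm ht0 ht1 hAconv hBconv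
      (hfin F₁ hF₁0 hF₁i hFlt s hs0) (hfin G₁ hG₁0 hG₁i hGlt s hs0) hAne hBne ?_
    intro u hu v hv
    simp only [Set.mem_setOf_eq] at hu hv ⊢
    have h1 : s ^ t * s ^ (1 - t) < F₁ u ^ t * G₁ v ^ (1 - t) :=
      mul_lt_mul'' (Real.rpow_lt_rpow hs0.le hu ht0)
        (Real.rpow_lt_rpow hs0.le hv ht1')
        (Real.rpow_nonneg hs0.le _) (Real.rpow_nonneg hs0.le _)
    have h2 : s ^ t * s ^ (1 - t) = s := by
      rw [← Real.rpow_add hs0, show t + (1 - t) = 1 by ring, Real.rpow_one]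
    exact (h2 ▸ h1).trans_le (hyp₁ u v)
  -- layer cake
  have LCF : ∫⁻ y, ENNReal.ofReal (F₁ y) = ∫⁻ s in Set.Ioi 0, mF s :=
    lintegral_eq_lintegral_meas_lt volume (Filter.Eventually.of_forall hF₁0)
      hF₁i.aemeasurable
  have LCG : ∫⁻ y, ENNReal.ofReal (G₁ y) = ∫⁻ s in Set.Ioi 0, mG s :=
    lintegral_eq_lintegral_meas_lt volume (Filter.Eventually.of_forall hG₁0)
      hG₁i.aemeasurable
  have LCH : ∫⁻ y, ENNReal.ofReal (H₁ y) = ∫⁻ s in Set.Ioi 0, mH s :=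
    lintegral_eq_lintegral_meas_lt volume (Filter.Eventually.of_forall hH₁0)
      hH₁i.aemeasurable
  have hdisj : Disjoint (Set.Ioo (0:ℝ) 1) (Set.Ici (1:ℝ)) := by
    rw [Set.disjoint_left]
    rintro x ⟨_, hx1⟩ hx1'
    exact absurd hx1' (not_le.2 hx1)
  have trunc : ∀ (m : ℝ → ℝ≥0∞), (∀ s, 1 ≤ s → m s = 0) →
      ∫⁻ s in Set.Ioi (0:ℝ), m s = ∫⁻ s in Set.Ioo (0:ℝ) 1, m s := by
    intro m hm
    rw [← Set.Ioo_union_Ici_eq_Ioi (zero_lt_one : (0:ℝ) < 1),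
      lintegral_union measurableSet_Ici hdisj]
    have hz : ∫⁻ s in Set.Ici (1:ℝ), m s = 0 := by
      rw [setLIntegral_congr_fun measurableSet_Ici
        (fun s hs => hm s hs)]
      exact lintegral_zero
    rw [hz, add_zero]
  have truncF : ∫⁻ s in Set.Ioi (0:ℝ), mF s = ∫⁻ s in Set.Ioo (0:ℝ) 1, mF s := by
    refine trunc mF fun s hs => ?_
    have : {y | s < F₁ y} = ∅ := by
      ext y
      simp only [Set.mem_setOf_eq, Set.mem_empty_iff_false, iff_false, not_lt]
      exact (hF₁le y).trans hs
    rw [hmF]; simp only [this, measure_empty]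
  have truncG : ∫⁻ s in Set.Ioi (0:ℝ), mG s = ∫⁻ s in Set.Ioo (0:ℝ) 1, mG s := by
    refine trunc mG fun s hs => ?_
    have : {y | s < G₁ y} = ∅ := by
      ext y
      simp only [Set.mem_setOf_eq, Set.mem_empty_iff_false, iff_false, not_lt]
      exact (hG₁le y).trans hs
    rw [hmG]; simp only [this, measure_empty]
  -- main ENNReal chain
  have chain : ENNReal.ofReal t * (∫⁻ y, ENNReal.ofReal (F₁ y))
      + ENNReal.ofReal (1 - t) * (∫⁻ y, ENNReal.ofReal (G₁ y))
      ≤ ∫⁻ y, ENNReal.ofReal (H₁ y) := by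
    rw [LCF, LCG, LCH, truncF, truncG]
    calc ENNReal.ofReal t * (∫⁻ s in Set.Ioo (0:ℝ) 1, mF s)
          + ENNReal.ofReal (1 - t) * (∫⁻ s in Set.Ioo (0:ℝ) 1, mG s)
        = ∫⁻ s in Set.Ioo (0:ℝ) 1,
            (ENNReal.ofReal t * mF s + ENNReal.ofReal (1 - t) * mG s) := by
          rw [lintegral_add_left (hmFmeas.const_mul _),
            lintegral_const_mul _ hmFmeas, lintegral_const_mul _ hmGmeas]
      _ ≤ ∫⁻ s in Set.Ioo (0:ℝ) 1, mH s := setLIntegral_mono hmHmeas key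
      _ ≤ ∫⁻ s in Set.Ioi (0:ℝ), mH s := lintegral_mono_set Set.Ioo_subset_Ioi_self
  -- back to real integrals
  have eF : ∫ y, F₁ y = (∫⁻ y, ENNReal.ofReal (F₁ y)).toReal :=
    integral_eq_lintegral_of_nonneg_ae (Filter.Eventually.of_forall hF₁0) hF₁i.1
  have eG : ∫ y, G₁ y = (∫⁻ y, ENNReal.ofReal (G₁ y)).toReal :=
    integral_eq_lintegral_of_nonneg_ae (Filter.Eventually.of_forall hG₁0) hG₁i.1
  have eH : ∫ y, H₁ y = (∫⁻ y, ENNReal.ofReal (H₁ y)).toReal :=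
    integral_eq_lintegral_of_nonneg_ae (Filter.Eventually.of_forall hH₁0) hH₁i.1
  have hreal : t * (∫ y, F₁ y) + (1 - t) * (∫ y, G₁ y) ≤ ∫ y, H₁ y := by
    rw [eF, eG, eH]
    have h := ENNReal.toReal_mono hHlt.ne chain
    rwa [ENNReal.toReal_add (ENNReal.mul_ne_top ENNReal.ofReal_ne_top hFlt.ne)
        (ENNReal.mul_ne_top ENNReal.ofReal_ne_top hGlt.ne),
      ENNReal.toReal_mul, ENNReal.toReal_mul,
      ENNReal.toReal_ofReal ht0.le, ENNReal.toReal_ofReal ht1'.le] at h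
  have hAMGM : (∫ y, F₁ y) ^ t * (∫ y, G₁ y) ^ (1 - t) ≤ ∫ y, H₁ y :=
    le_trans (Real.geom_mean_le_arith_mean2_weighted ht0.le ht1'.le
      (integral_nonneg hF₁0) (integral_nonneg hG₁0) (by ring)) hreal
  -- unnormalize
  have iF : ∫ y, F₁ y = (∫ y, F y) / MF := integral_div MF F
  have iG : ∫ y, G₁ y = (∫ y, G y) / MG := integral_div MG G
  have iH : ∫ y, H₁ y = (∫ y, H y) / MH := integral_div MH H
  rw [iF, iG, iH, Real.div_rpow (integral_nonneg hF0) hMF.le,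
    Real.div_rpow (integral_nonneg hG0) hMG.le, div_mul_div_comm, ← hMHdef,
    div_le_div_iff_of_pos_right hMH] at hAMGM
  exact hAMGM

end ConvLC

open ConvLC

/-- The convolution `h(x) = ∫ f(x - y) g(y) dy` of two integrable, nonnegative,
log-concave functions on `ℝ` is log-concave. -/
theorem convolution_logConcave
    (f g : ℝ → ℝ)
    (hf0 : ∀ x, 0 ≤ f x) (hg0 : ∀ x, 0 ≤ g x)
    (hfi : Integrable f) (hgi : Integrable g)
    (hflc : ∀ x y t : ℝ, 0 ≤ t → t ≤ 1 →
      f x ^ t * f y ^ (1 - t) ≤ f (t * x + (1 - t) * y))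
    (hglc : ∀ x y t : ℝ, 0 ≤ t → t ≤ 1 →
      g x ^ t * g y ^ (1 - t) ≤ g (t * x + (1 - t) * y))
    (h : ℝ → ℝ) (hh : ∀ x, h x = ∫ y, f (x - y) * g y) :
    ∀ x₁ x₂ t : ℝ, 0 ≤ t → t ≤ 1 →
      h x₁ ^ t * h x₂ ^ (1 - t) ≤ h (t * x₁ + (1 - t) * x₂) := by
  intro x₁ x₂ t ht0 ht1
  have hhnn : ∀ x, 0 ≤ h x := fun x =>
    (hh x) ▸ integral_nonneg (fun y => mul_nonneg (hf0 _) (hg0 _))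
  obtain rfl | ht0' := ht0.eq_or_lt
  · simp
  obtain rfl | ht1' := ht1.eq_or_lt
  · simp
  by_cases hfdeg : ∃ a b, a < b ∧ 0 < f a ∧ 0 < f b
  swap
  · have hz := conv_zero_left hf0 hfdeg hh
    rw [hz x₁, hz x₂, hz _, Real.zero_rpow ht0'.ne', zero_mul]
  by_cases hgdeg : ∃ a b, a < b ∧ 0 < g a ∧ 0 < g b
  swap
  · have hz := conv_zero_right hg0 hgdeg hh
    rw [hz x₁, hz x₂, hz _, Real.zero_rpow ht0'.ne', zero_mul]
  obtain ⟨a₁, b₁, hab₁, hfa, hfb⟩ := hfdeg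
  obtain ⟨a₂, b₂, hab₂, hga, hgb⟩ := hgdeg
  obtain ⟨Mf, hMf⟩ := logConcave_bounded hf0 hfi hflc hab₁ hfa hfb
  obtain ⟨Mg, hMg⟩ := logConcave_bounded hg0 hgi hglc hab₂ hga hgb
  rcases (hhnn x₁).eq_or_lt with hzx₁ | hpx₁
  · rw [← hzx₁, Real.zero_rpow ht0'.ne', zero_mul]; exact hhnn _
  rcases (hhnn x₂).eq_or_lt with hzx₂ | hpx₂
  · rw [← hzx₂, Real.zero_rpow (sub_pos.2 ht1').ne', mul_zero]; exact hhnn _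
  -- set up the three slice functions
  have hFlc : ∀ (u : ℝ) (y z s : ℝ), 0 ≤ s → s ≤ 1 →
      (f (u - y) * g y) ^ s * (f (u - z) * g z) ^ (1 - s)
        ≤ f (u - (s * y + (1 - s) * z)) * g (s * y + (1 - s) * z) := by
    intro u y z s hs0 hs1
    have := lc_mul_bound hf0 hg0 hflc hglc u u s hs0 hs1 y z
    rwa [show s * u + (1 - s) * u = u by ring] at this
  have hint : ∀ u : ℝ, Integrable (fun y => f (u - y) * g y) :=
    fun u => conv_integrable hf0 hg0 hfi.1 hgi hMf u
  have hnn : ∀ (u : ℝ) (y : ℝ), 0 ≤ f (u - y) * g y :=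
    fun u y => mul_nonneg (hf0 _) (hg0 _)
  -- suprema
  have hbdd : ∀ u : ℝ, BddAbove (Set.range fun y => f (u - y) * g y) := by
    intro u
    refine ⟨Mf * Mg, ?_⟩
    rintro _ ⟨y, rfl⟩
    exact mul_le_mul (hMf (u - y)) (hMg y) (hg0 y) ((hf0 (u - y)).trans (hMf (u - y)))
  have hsupfacts : ∀ u : ℝ, 0 < h u →
      0 < sSup (Set.range fun y => f (u - y) * g y)
      ∧ (∀ y, f (u - y) * g y ≤ sSup (Set.range fun y => f (u - y) * g y))
      ∧ (∀ s, s < sSup (Set.range fun y => f (u - y) * g y) →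
          ∃ y, s < f (u - y) * g y) := by
    intro u hu
    have hle : ∀ y, f (u - y) * g y ≤ sSup (Set.range fun y => f (u - y) * g y) :=
      fun y => le_csSup (hbdd u) ⟨y, rfl⟩
    refine ⟨?_, hle, ?_⟩
    · obtain ⟨y₀, hy₀⟩ : ∃ y, 0 < f (u - y) * g y := by
        by_contra hcon
        push_neg at hcon
        have hzero : ∀ y, f (u - y) * g y = 0 :=
          fun y => le_antisymm (hcon y) (hnn u y)
        have : h u = 0 := by
          rw [hh u]
          simp only [hzero]
          exact integral_zero _ _
        exact hu.ne' this
      exact lt_of_lt_of_le hy₀ (hle y₀)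
    · intro s hs
      obtain ⟨_, ⟨y, rfl⟩, hy⟩ :=
        exists_lt_of_lt_csSup ⟨f (u - 0) * g 0, Set.mem_range_self 0⟩ hs
      exact ⟨y, hy⟩
  obtain ⟨hMF, hFle, hFsup⟩ := hsupfacts x₁ hpx₁
  obtain ⟨hMG, hGle, hGsup⟩ := hsupfacts x₂ hpx₂
  have key := prekopa_leindler_dim1 ht0' ht1'
    (fun y => f (x₁ - y) * g y) (fun y => f (x₂ - y) * g y)
    (fun y => f ((t * x₁ + (1 - t) * x₂) - y) * g y)
    (hnn x₁) (hnn x₂) (hnn _) (hint x₁) (hint x₂) (hint _)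
    (hFlc x₁) (hFlc x₂)
    (fun y z => lc_mul_bound hf0 hg0 hflc hglc x₁ x₂ t ht0'.le ht1'.le y z)
    hMF hMG hFle hGle hFsup hGsup
  rw [hh x₁, hh x₂, hh (t * x₁ + (1 - t) * x₂)]
  exact key
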